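/- arXiv:2407.01382 — 2 statements merged into one kernel-verified Lean document; each statement's English description precedes it below -/
import Mathlib

section
/- Let n ≥ 4 and suppose candidate 1 and candidate 2^{n−1}+1 are two top seeds who are only allowed to meet in the final round, i.e., brackets π must place these two candidates in opposite halves (the positions of 1 and 2^{n−1}+1 in π are not in the same half {1,…,2^{n−1}} or {2^{n−1}+1,…,2^n}). Then for every candidate i ∈ [2^n] there exists such a constrained bracket π with w_n(η_{n−3}, π) = i. -/
/-- One knockout round: adjacent pairs play and the winners survive. -/
def roundStep (beats : ℕ → ℕ → Bool) : List ℕ → List ℕ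
  | a :: b :: rest => (if beats a b then a else b) :: roundStep beats rest
  | l => l

/-- The winner of the single-elimination knockout tournament with bracket `π`
(a list of length `2^n`), pairwise challenges decided by `beats`. -/
def knockWinner (n : ℕ) (beats : ℕ → ℕ → Bool) (π : List ℕ) : ℕ :=
  ((roundStep beats)^[n] π).headI

/-- The arrows of the tournament `η₀` on `{1,…,8}`. -/
def eta0Pairs : List (ℕ × ℕ) :=
  [(1,2),(1,3),(1,5),(2,3),(2,4),(2,6),(2,7),
   (3,4),(3,5),(3,6),(3,8),(4,1),(4,5),(4,8),
   (5,2),(5,6),(5,7),(6,1),(6,4),(6,7),(6,8),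
   (7,1),(7,3),(7,4),(7,8),(8,1),(8,2),(8,5)]

/-- The tournament `η₀` on `{1,…,8}`: `eta0 i j = true` iff `i ▷ j`. -/
def eta0 (i j : ℕ) : Bool := decide ((i, j) ∈ eta0Pairs)

/-- The recursively defined tournaments: `eta n` is the tournament `η_n` on
`{1,…,2^(n+3)}`, `eta n i j = true` meaning `i ▷ j`. -/
def eta : ℕ → ℕ → ℕ → Bool
  | 0, i, j => eta0 i j
  | n+1, i, j =>
    if i ≤ 2^(n+3) ∧ j ≤ 2^(n+3) then eta n i j
    else if 2^(n+3) < i ∧ 2^(n+3) < j then eta n (i - 2^(n+3)) (j - 2^(n+3))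
    else if i ≤ 2^(n+3) then decide ((i + j) % 2 = 0)
    else decide ((i + j) % 2 = 1)


theorem roundStep_append (b : ℕ → ℕ → Bool) :
    ∀ (l1 l2 : List ℕ), l1.length % 2 = 0 →
      roundStep b (l1 ++ l2) = roundStep b l1 ++ roundStep b l2
  | [], _, _ => rfl
  | [a], _, h => by simp at h
  | a :: c :: rest, l2, h => by
    show (if b a c then a else c) :: roundStep b (rest ++ l2)
        = ((if b a c then a else c) :: roundStep b rest) ++ roundStep b l2
    rw [List.cons_append, roundStep_append b rest l2 (by simp [List.length_cons] at h; omega)]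

theorem roundStep_length (b : ℕ → ℕ → Bool) :
    ∀ l : List ℕ, l.length % 2 = 0 → (roundStep b l).length = l.length / 2
  | [], _ => rfl
  | [a], h => by simp at h
  | a :: c :: rest, h => by
    show ((if b a c then a else c) :: roundStep b rest).length = (a :: c :: rest).length / 2
    simp only [List.length_cons]
    rw [roundStep_length b rest (by simp [List.length_cons] at h; omega)]
    omega

theorem mem_of_mem_roundStep (b : ℕ → ℕ → Bool) :
    ∀ (l : List ℕ) (x : ℕ), x ∈ roundStep b l → x ∈ l
  | [], _, hx => hx
  | [a], _, hx => hx
  | a :: c :: rest, x, hx => by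
    have hx' : x ∈ (if b a c then a else c) :: roundStep b rest := hx
    rcases List.mem_cons.mp hx' with h | h
    · by_cases hb : b a c
      · simp [hb] at h; simp [h]
      · simp [hb] at h; simp [h]
    · have := mem_of_mem_roundStep b rest x h
      simp [this]

theorem roundStep_congr (b b' : ℕ → ℕ → Bool) : ∀ l : List ℕ,
    (∀ x ∈ l, ∀ y ∈ l, b x y = b' x y) → roundStep b l = roundStep b' l
  | [], _ => rfl
  | [a], _ => rfl
  | a :: c :: rest, h => by
    show (if b a c then a else c) :: roundStep b rest
        = (if b' a c then a else c) :: roundStep b' rest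
    rw [h a (by simp) c (by simp),
      roundStep_congr b b' rest (fun x hx y hy => h x (by simp [hx]) y (by simp [hy]))]

theorem roundStep_map (b b' : ℕ → ℕ → Bool) (f : ℕ → ℕ) : ∀ l : List ℕ,
    (∀ x ∈ l, ∀ y ∈ l, b' (f x) (f y) = b x y) →
      roundStep b' (l.map f) = (roundStep b l).map f
  | [], _ => rfl
  | [a], _ => rfl
  | a :: c :: rest, h => by
    show (if b' (f a) (f c) then f a else f c) :: roundStep b' (rest.map f)
        = ((if b a c then a else c) :: roundStep b rest).map f
    rw [h a (by simp) c (by simp),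
      roundStep_map b b' f rest (fun x hx y hy => h x (by simp [hx]) y (by simp [hy]))]
    simp [apply_ite]

theorem iter_length (b : ℕ → ℕ → Bool) (k : ℕ) :
    ∀ l : List ℕ, l.length = 2^k → ((roundStep b)^[k] l).length = 1 := by
  induction k with
  | zero => intro l h; simpa using h
  | succ k ih =>
    intro l h
    have e : l.length % 2 = 0 := by rw [h, pow_succ]; omega
    rw [Function.iterate_succ_apply]
    exact ih _ (by rw [roundStep_length b l e, h, pow_succ]; omega)

theorem iter_append (b : ℕ → ℕ → Bool) (k : ℕ) :
    ∀ l1 l2 : List ℕ, l1.length = 2^k → l2.length = 2^k →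
      (roundStep b)^[k] (l1 ++ l2) = (roundStep b)^[k] l1 ++ (roundStep b)^[k] l2 := by
  induction k with
  | zero => intros; rfl
  | succ k ih =>
    intro l1 l2 h1 h2
    have e1 : l1.length % 2 = 0 := by rw [h1, pow_succ]; omega
    have e2 : l2.length % 2 = 0 := by rw [h2, pow_succ]; omega
    rw [Function.iterate_succ_apply, Function.iterate_succ_apply, Function.iterate_succ_apply,
      roundStep_append b l1 l2 e1]
    exact ih _ _ (by rw [roundStep_length b l1 e1, h1, pow_succ]; omega)
      (by rw [roundStep_length b l2 e2, h2, pow_succ]; omega)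

theorem iter_congr (b b' : ℕ → ℕ → Bool) (k : ℕ) : ∀ l : List ℕ,
    (∀ x ∈ l, ∀ y ∈ l, b x y = b' x y) →
      (roundStep b)^[k] l = (roundStep b')^[k] l := by
  induction k with
  | zero => intro l _; rfl
  | succ k ih =>
    intro l h
    rw [Function.iterate_succ_apply, Function.iterate_succ_apply, roundStep_congr b b' l h]
    exact ih _ (fun x hx y hy => h x (mem_of_mem_roundStep b' l x (roundStep_congr b b' l h ▸ hx))
      y (mem_of_mem_roundStep b' l y (roundStep_congr b b' l h ▸ hy)))

theorem iter_map (b b' : ℕ → ℕ → Bool) (f : ℕ → ℕ) (k : ℕ) : ∀ l : List ℕ,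
    (∀ x ∈ l, ∀ y ∈ l, b' (f x) (f y) = b x y) →
      (roundStep b')^[k] (l.map f) = ((roundStep b)^[k] l).map f := by
  induction k with
  | zero => intro l _; rfl
  | succ k ih =>
    intro l h
    rw [Function.iterate_succ_apply, Function.iterate_succ_apply, roundStep_map b b' f l h]
    exact ih _ (fun x hx y hy =>
      h x (mem_of_mem_roundStep b l x hx) y (mem_of_mem_roundStep b l y hy))

theorem knockWinner_congr (k : ℕ) (b b' : ℕ → ℕ → Bool) (l : List ℕ)
    (h : ∀ x ∈ l, ∀ y ∈ l, b x y = b' x y) :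
    knockWinner k b l = knockWinner k b' l := by
  unfold knockWinner
  rw [iter_congr b b' k l h]

theorem knockWinner_map (k : ℕ) (b b' : ℕ → ℕ → Bool) (f : ℕ → ℕ) (l : List ℕ)
    (hlen : l.length = 2^k)
    (h : ∀ x ∈ l, ∀ y ∈ l, b' (f x) (f y) = b x y) :
    knockWinner k b' (l.map f) = f (knockWinner k b l) := by
  unfold knockWinner
  rw [iter_map b b' f k l h]
  obtain ⟨w, hw⟩ := List.length_eq_one_iff.mp (iter_length b k l hlen)
  rw [hw]; rfl

theorem knockWinner_append (k : ℕ) (b : ℕ → ℕ → Bool) (l1 l2 : List ℕ)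
    (h1 : l1.length = 2^k) (h2 : l2.length = 2^k) :
    knockWinner (k+1) b (l1 ++ l2)
      = if b (knockWinner k b l1) (knockWinner k b l2) then knockWinner k b l1
        else knockWinner k b l2 := by
  obtain ⟨w1, hw1⟩ := List.length_eq_one_iff.mp (iter_length b k l1 h1)
  obtain ⟨w2, hw2⟩ := List.length_eq_one_iff.mp (iter_length b k l2 h2)
  have e1 : knockWinner k b l1 = w1 := by rw [knockWinner, hw1]; rfl
  have e2 : knockWinner k b l2 = w2 := by rw [knockWinner, hw2]; rfl
  rw [knockWinner, Function.iterate_succ_apply', iter_append b k l1 l2 h1 h2, hw1, hw2, e1, e2]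
  show (roundStep b [w1, w2]).headI = _
  show (if b w1 w2 then w1 else w2) = _
  rfl

theorem mem_range1 {x N : ℕ} : x ∈ List.range' 1 N ↔ 1 ≤ x ∧ x ≤ N := by
  rw [List.mem_range']
  constructor
  · rintro ⟨i, h, rfl⟩; omega
  · rintro ⟨h1, h2⟩; exact ⟨x - 1, by omega, by omega⟩

theorem key0 : ∀ i ∈ List.range' 1 (2^3), ∃ π : List ℕ,
    π.Perm (List.range' 1 (2^3)) ∧ knockWinner 3 (eta 0) π = i := by
  intro i hi
  rw [show (2:ℕ)^3 = 8 from rfl, mem_range1] at hi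
  obtain ⟨h1, h2⟩ := hi
  interval_cases i
  · exact ⟨[1,2,3,4,5,6,7,8], by decide, by decide⟩
  · exact ⟨[1,3,4,5,2,6,7,8], by decide, by decide⟩
  · exact ⟨[1,2,4,5,3,8,6,7], by decide, by decide⟩
  · exact ⟨[1,2,3,6,4,8,5,7], by decide, by decide⟩
  · exact ⟨[1,3,4,6,2,5,7,8], by decide, by decide⟩
  · exact ⟨[1,2,3,4,5,8,6,7], by decide, by decide⟩
  · exact ⟨[1,2,3,6,4,5,7,8], by decide, by decide⟩
  · exact ⟨[1,3,2,8,4,6,5,7], by decide, by decide⟩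

theorem build (m : ℕ)
    (Hkey : ∀ i ∈ List.range' 1 (2^(m+3)), ∃ π : List ℕ,
      π.Perm (List.range' 1 (2^(m+3))) ∧ knockWinner (m+3) (eta m) π = i) :
    ∀ i ∈ List.range' 1 (2^(m+4)), ∃ π : List ℕ,
      π.Perm (List.range' 1 (2^(m+4))) ∧
      ¬ ((π.idxOf 1 < 2^(m+3)) ↔ (π.idxOf (2^(m+3)+1) < 2^(m+3))) ∧
      knockWinner (m+4) (eta (m+1)) π = i := by
  intro i hi
  rw [mem_range1] at hi
  have hN2 : (2:ℕ)^(m+4) = 2^(m+3) + 2^(m+3) := by rw [pow_succ]; ring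
  have hNeven : (2:ℕ)^(m+3) % 2 = 0 := by
    have : (2:ℕ)^(m+3) = 2^(m+2) * 2 := by rw [pow_succ]
    omega
  have hN8 : (8:ℕ) ≤ 2^(m+3) := by
    calc (8:ℕ) = 2^3 := rfl
    _ ≤ 2^(m+3) := Nat.pow_le_pow_right (by norm_num) (by omega)
  -- the shifted-half beats relation
  have hshift : ∀ σ : List ℕ, σ.Perm (List.range' 1 (2^(m+3))) →
      ∀ x ∈ σ, ∀ y ∈ σ, eta (m+1) (2^(m+3) + x) (2^(m+3) + y) = eta m x y := by
    intro σ hσ x hx y hy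
    have hx' := mem_range1.mp (hσ.subset hx)
    have hy' := mem_range1.mp (hσ.subset hy)
    show (if 2^(m+3) + x ≤ 2^(m+3) ∧ 2^(m+3) + y ≤ 2^(m+3) then _ else _) = _
    rw [if_neg (by omega), if_pos ⟨by omega, by omega⟩,
      Nat.add_sub_cancel_left, Nat.add_sub_cancel_left]
  have hlow : ∀ σ : List ℕ, σ.Perm (List.range' 1 (2^(m+3))) →
      ∀ x ∈ σ, ∀ y ∈ σ, eta (m+1) x y = eta m x y := by
    intro σ hσ x hx y hy
    have hx' := mem_range1.mp (hσ.subset hx)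
    have hy' := mem_range1.mp (hσ.subset hy)
    show (if x ≤ 2^(m+3) ∧ y ≤ 2^(m+3) then _ else _) = _
    rw [if_pos ⟨hx'.2, hy'.2⟩]
  by_cases hc : i ≤ 2^(m+3)
  · -- i in the lower half: lower bracket wins with i, upper bracket wins with 2^(m+3)+i
    obtain ⟨π₁, hp1, hw1⟩ := Hkey i (mem_range1.mpr ⟨hi.1, hc⟩)
    obtain ⟨σ, hp2, hw2⟩ := Hkey i (mem_range1.mpr ⟨hi.1, hc⟩)
    have hlen1 : π₁.length = 2^(m+3) := by rw [hp1.length_eq, List.length_range']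
    have hlen2 : (σ.map (2^(m+3) + ·)).length = 2^(m+3) := by
      rw [List.length_map, hp2.length_eq, List.length_range']
    have hmp : (σ.map (2^(m+3) + ·)).Perm (List.range' (2^(m+3)+1) (2^(m+3))) := by
      have := hp2.map (2^(m+3) + ·)
      rwa [List.map_add_range'] at this
    refine ⟨π₁ ++ σ.map (2^(m+3) + ·), ?_, ?_, ?_⟩
    · refine (hp1.append hmp).trans ?_
      rw [show (2:ℕ)^(m+3)+1 = 1 + 2^(m+3) by omega, List.range'_append_1, ← hN2]
    · have h1mem : (1:ℕ) ∈ π₁ := hp1.mem_iff.mpr (mem_range1.mpr ⟨le_refl 1, by omega⟩)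
      have hP : (π₁ ++ σ.map (2^(m+3) + ·)).idxOf 1 < 2^(m+3) := by
        rw [List.idxOf_append_of_mem h1mem]
        have := List.idxOf_lt_length_iff.mpr h1mem
        omega
      have hQnot : ¬ (π₁ ++ σ.map (2^(m+3) + ·)).idxOf (2^(m+3)+1) < 2^(m+3) := by
        have hnm : (2^(m+3)+1 : ℕ) ∉ π₁ := by
          intro hmem
          have := mem_range1.mp (hp1.subset hmem)
          omega
        rw [List.idxOf_append_of_notMem hnm]
        omega
      exact fun h => hQnot (h.mp hP)
    · show knockWinner ((m+3)+1) (eta (m+1)) _ = i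
      rw [knockWinner_append (m+3) (eta (m+1)) _ _ hlen1 hlen2]
      have e1 : knockWinner (m+3) (eta (m+1)) π₁ = i := by
        rw [knockWinner_congr (m+3) (eta (m+1)) (eta m) π₁ (hlow π₁ hp1), hw1]
      have e2 : knockWinner (m+3) (eta (m+1)) (σ.map (2^(m+3) + ·)) = 2^(m+3) + i := by
        rw [knockWinner_map (m+3) (eta m) (eta (m+1)) (2^(m+3) + ·) σ
          (by rw [hp2.length_eq, List.length_range']) (hshift σ hp2), hw2]
      rw [e1, e2]
      have hbeat : eta (m+1) i (2^(m+3) + i) = true := by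
        show (if i ≤ 2^(m+3) ∧ 2^(m+3) + i ≤ 2^(m+3) then _ else _) = true
        rw [if_neg (by omega), if_neg (by omega), if_pos hc]
        simp only [decide_eq_true_eq]
        omega
      rw [hbeat, if_pos rfl]
  · -- i in the upper half
    have hi' : 1 ≤ i - 2^(m+3) ∧ i - 2^(m+3) ≤ 2^(m+3) := by omega
    obtain ⟨j, hj1, hj2, hjpar⟩ : ∃ j, 1 ≤ j ∧ j ≤ 2^(m+3) ∧ (i - 2^(m+3) + j) % 2 = 1 := by
      by_cases h : i - 2^(m+3) = 2^(m+3)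
      · exact ⟨2^(m+3) - 1, by omega, by omega, by omega⟩
      · exact ⟨i - 2^(m+3) + 1, by omega, by omega, by omega⟩
    obtain ⟨σ, hp2, hw2⟩ := Hkey (i - 2^(m+3)) (mem_range1.mpr hi')
    obtain ⟨π₁, hp1, hw1⟩ := Hkey j (mem_range1.mpr ⟨hj1, hj2⟩)
    have hlen1 : π₁.length = 2^(m+3) := by rw [hp1.length_eq, List.length_range']
    have hlen2 : (σ.map (2^(m+3) + ·)).length = 2^(m+3) := by
      rw [List.length_map, hp2.length_eq, List.length_range']
    have hmp : (σ.map (2^(m+3) + ·)).Perm (List.range' (2^(m+3)+1) (2^(m+3))) := by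
      have := hp2.map (2^(m+3) + ·)
      rwa [List.map_add_range'] at this
    refine ⟨σ.map (2^(m+3) + ·) ++ π₁, ?_, ?_, ?_⟩
    · refine (hmp.append hp1).trans ?_
      refine (List.perm_append_comm).trans ?_
      rw [show (2:ℕ)^(m+3)+1 = 1 + 2^(m+3) by omega, List.range'_append_1, ← hN2]
    · have h1nm : (1:ℕ) ∉ σ.map (2^(m+3) + ·) := by
        intro hmem
        obtain ⟨x, hx, hx1⟩ := List.mem_map.mp hmem
        omega
      have hQmem : (2^(m+3)+1 : ℕ) ∈ σ.map (2^(m+3) + ·) := by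
        refine List.mem_map.mpr ⟨1, hp2.mem_iff.mpr (mem_range1.mpr ⟨le_refl 1, by omega⟩), rfl⟩
      have hQ : (σ.map (2^(m+3) + ·) ++ π₁).idxOf (2^(m+3)+1) < 2^(m+3) := by
        rw [List.idxOf_append_of_mem hQmem]
        have := List.idxOf_lt_length_iff.mpr hQmem
        omega
      have hPnot : ¬ (σ.map (2^(m+3) + ·) ++ π₁).idxOf 1 < 2^(m+3) := by
        rw [List.idxOf_append_of_notMem h1nm]
        omega
      exact fun h => hPnot (h.mpr hQ)
    · show knockWinner ((m+3)+1) (eta (m+1)) _ = i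
      rw [knockWinner_append (m+3) (eta (m+1)) _ _ hlen2 hlen1]
      have e1 : knockWinner (m+3) (eta (m+1)) π₁ = j := by
        rw [knockWinner_congr (m+3) (eta (m+1)) (eta m) π₁ (hlow π₁ hp1), hw1]
      have e2 : knockWinner (m+3) (eta (m+1)) (σ.map (2^(m+3) + ·)) = i := by
        rw [knockWinner_map (m+3) (eta m) (eta (m+1)) (2^(m+3) + ·) σ
          (by rw [hp2.length_eq, List.length_range']) (hshift σ hp2), hw2]
        omega
      rw [e1, e2]
      have hbeat : eta (m+1) i j = true := by
        show (if i ≤ 2^(m+3) ∧ j ≤ 2^(m+3) then _ else _) = true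
        rw [if_neg (by omega), if_neg (by omega), if_neg (by omega)]
        simp only [decide_eq_true_eq]
        omega
      rw [hbeat, if_pos rfl]

theorem key : ∀ m : ℕ, ∀ i ∈ List.range' 1 (2^(m+3)), ∃ π : List ℕ,
    π.Perm (List.range' 1 (2^(m+3))) ∧ knockWinner (m+3) (eta m) π = i
  | 0 => key0
  | m+1 => fun i hi => by
    obtain ⟨π, h1, _, h3⟩ := build m (key m) i hi
    exact ⟨π, h1, h3⟩

/-- Remark 1, top seeds: for `n ≥ 4`, even under the constraint that candidates `1` and
`2^(n-1)+1` are placed in opposite halves of the bracket (so they can only meet in the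
final round), every candidate `i ∈ {1,…,2^n}` can win the knockout tournament under
`η_{n-3}`. Positions in the list are 0-based, so the first half consists of the
positions `< 2^(n-1)`. -/
theorem stmt16 (n : ℕ) (hn : 4 ≤ n) (i : ℕ) (hi : i ∈ List.range' 1 (2^n)) :
    ∃ π : List ℕ, π.Perm (List.range' 1 (2^n)) ∧
      ¬ ((π.idxOf 1 < 2^(n-1)) ↔ (π.idxOf (2^(n-1)+1) < 2^(n-1))) ∧
      knockWinner n (eta (n-3)) π = i := by
  obtain ⟨m, rfl⟩ : ∃ m, n = m + 4 := ⟨n - 4, by omega⟩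
  have h1 : m + 4 - 1 = m + 3 := rfl
  have h2 : m + 4 - 3 = m + 1 := rfl
  rw [h1, h2]
  exact build m (key m) i hi
end

section
/- Consider 8 candidates and the 10-row voting profile R₀ generating η₀. Let W₁,…,W₁₀ be independent Poisson random variables, each with mean λ/10, and let E be the event that the random voting profile consisting of W_k copies of the k-th row of R₀ generates a preference pattern different from η₀. Then P(E) ≤ 28·exp(−λ(1 − √24/5)); in particular, if λ ≥ 394 then P(E) ≤ 1/100. -/
/-- Stearns' ten-row voting profile `R₀` on `{1,…,8}`. -/
def R0 : List (List ℕ) :=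
  [[8,1,5,2,3,4,6,7],[2,7,6,4,1,3,5,8],[2,7,3,6,4,5,8,1],[4,1,3,8,5,6,7,2],
   [3,5,2,6,7,1,4,8],[6,8,4,1,5,7,2,3],[6,7,3,4,8,1,2,5],[8,5,2,7,1,4,3,6],
   [7,8,5,6,3,4,1,2],[1,2,3,4,5,6,7,8]]

/-- Weighted number of preference lists ranking `i` before `j`, in the random voting
profile consisting of `W k` identical copies of the `k`-th row of `R`. -/
def wPrefCount (R : List (List ℕ)) (W : ℕ → ℕ) (i j : ℕ) : ℕ :=
  ((List.range R.length).map fun k =>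
    if (R.getD k []).idxOf i < (R.getD k []).idxOf j then W k else 0).sum

/-- The event that the random voting profile consisting of `W k` copies of the `k`-th row
of `R` generates (by weighted strict majority) a preference pattern on `{1,…,m}` different
from the tournament `η`. -/
def BadEvent (R : List (List ℕ)) (m : ℕ) (η : ℕ → ℕ → Bool) (W : ℕ → ℕ) : Prop :=
  ∃ i ∈ List.range' 1 m, ∃ j ∈ List.range' 1 m, i ≠ j ∧
    ¬ ((wPrefCount R W j i < wPrefCount R W i j) ↔ η i j = true)


set_option maxHeartbeats 1000000

def pref (i j k : ℕ) : Prop := (R0.getD k []).idxOf i < (R0.getD k []).idxOf j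
instance (i j k : ℕ) : Decidable (pref i j k) := inferInstanceAs (Decidable (_ < _))

lemma wPrefCount_eq (W : ℕ → ℕ) (i j : ℕ) :
    wPrefCount R0 W i j = ∑ k ∈ Finset.range 10, if pref i j k then W k else 0 := rfl

lemma card_pref {i j : ℕ} (h : (i, j) ∈ eta0Pairs) :
    6 ≤ ((Finset.range 10).filter (fun k => pref i j k)).card := by
  fin_cases h <;> decide

lemma pref_compl {i j : ℕ} (h : (i, j) ∈ eta0Pairs) {k : ℕ} (hk : k ∈ Finset.range 10) :
    pref j i k ↔ ¬ pref i j k := by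
  fin_cases h <;> fin_cases hk <;> decide

open MeasureTheory ProbabilityTheory

lemma lintegral_pow_count {Ω : Type*} [MeasurableSpace Ω]
    (P : Measure Ω) [IsProbabilityMeasure P] (lam : ℝ) (hlam : 0 ≤ lam)
    (W : Ω → ℕ) (hW : Measurable W)
    (hpois : ∀ m : ℕ, P {ω | W ω = m} = ENNReal.ofReal
      (Real.exp (-(lam / 10)) * (lam / 10) ^ m / (Nat.factorial m)))
    (c : ℝ) (hc : 0 ≤ c) :
    ∫⁻ ω, (ENNReal.ofReal c) ^ (W ω) ∂P
      = ENNReal.ofReal (Real.exp (-(lam/10)) * Real.exp (c * (lam / 10))) := by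
  have hmap : ∫⁻ ω, (ENNReal.ofReal c) ^ (W ω) ∂P
      = ∫⁻ n, (ENNReal.ofReal c) ^ n ∂(P.map W) :=
    (lintegral_map measurable_from_top hW).symm
  rw [hmap, lintegral_countable']
  have hterm : ∀ n : ℕ, (ENNReal.ofReal c) ^ n * (P.map W) {n}
      = ENNReal.ofReal (Real.exp (-(lam/10)) * ((c * (lam/10)) ^ n / n.factorial)) := by
    intro n
    have : (P.map W) {n} = P {ω | W ω = n} := by
      rw [Measure.map_apply hW (measurableSet_singleton n)]; rfl
    rw [this, hpois n, ← ENNReal.ofReal_pow hc, ← ENNReal.ofReal_mul (pow_nonneg hc n)]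
    congr 1
    rw [mul_pow]; ring
  have hsumm : Summable (fun n : ℕ =>
      Real.exp (-(lam/10)) * ((c * (lam/10)) ^ n / n.factorial)) :=
    (Real.summable_pow_div_factorial _).mul_left _
  have hnn : ∀ n : ℕ, 0 ≤ Real.exp (-(lam/10)) * ((c * (lam/10)) ^ n / n.factorial) := by
    intro n; positivity
  rw [tsum_congr hterm, ← ENNReal.ofReal_tsum_of_nonneg hnn hsumm, tsum_mul_left]
  congr 1
  rw [show ∑' n : ℕ, (c * (lam/10)) ^ n / n.factorial = Real.exp (c * (lam/10)) by
    rw [Real.exp_eq_exp_ℝ, NormedSpace.exp_eq_tsum_div]]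

lemma lintegral_prod_indep {Ω : Type*} [MeasurableSpace Ω] (P : Measure Ω) [IsProbabilityMeasure P]
    {ι : Type*} {g : ι → Ω → ENNReal} (hg : ∀ k, Measurable (g k))
    (hindep : iIndepFun g P) (s : Finset ι) :
    ∫⁻ ω, ∏ k ∈ s, g k ω ∂P = ∏ k ∈ s, ∫⁻ ω, g k ω ∂P := by
  classical
  induction s using Finset.induction with
  | empty => simp
  | @insert a s ha ih =>
    rw [Finset.prod_insert ha]
    simp_rw [Finset.prod_insert ha]
    have hindepf : IndepFun (g a) (fun ω => ∏ k ∈ s, g k ω) P := by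
      have h := (hindep.indepFun_finset_prod_of_notMem hg ha).symm
      have heq : (∏ j ∈ s, g j) = fun ω => ∏ k ∈ s, g k ω := by
        funext ω; exact Finset.prod_apply ω s g
      rwa [heq] at h
    rw [lintegral_mul_eq_lintegral_mul_lintegral_of_indepFun'' (hg a).aemeasurable
      (Finset.measurable_prod s (fun k _ => hg k)).aemeasurable hindepf, ih]

lemma pair_bound {Ω : Type*} [MeasurableSpace Ω] (P : Measure Ω) [IsProbabilityMeasure P]
    (lam : ℝ) (hlam : 0 < lam)
    (W : ℕ → Ω → ℕ) (hmeas : ∀ k, Measurable (W k))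
    (hindep : ProbabilityTheory.iIndepFun
      (fun k : Fin 10 => W k.1) P)
    (hpois : ∀ k < 10, ∀ m : ℕ,
      P {ω | W k ω = m} = ENNReal.ofReal
        (Real.exp (-(lam / 10)) * (lam / 10) ^ m / (Nat.factorial m)))
    {i j : ℕ} (hij : (i, j) ∈ eta0Pairs) :
    P {ω | wPrefCount R0 (fun k => W k ω) i j ≤ wPrefCount R0 (fun k => W k ω) j i}
      ≤ ENNReal.ofReal (Real.exp (-lam * (1 - Real.sqrt 24 / 5))) := by
  classical
  set s6 : ℝ := Real.sqrt 6 with hs6def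
  have hs6sq : s6 ^ 2 = 6 := Real.sq_sqrt (by norm_num)
  have hs6two : 2 ≤ s6 := by
    nlinarith [Real.sqrt_nonneg (6:ℝ)]
  set r : ℕ → ℝ := fun k => if pref i j k then s6/3 else s6/2 with hrdef
  have hs6pos : (0:ℝ) < s6 := by linarith
  have hrpos : ∀ k, 0 < r k := by
    intro k; simp only [hrdef]; split <;> linarith
  set t : ENNReal := ENNReal.ofReal (s6/2) with htdef
  have ht1 : 1 ≤ t := ENNReal.one_le_ofReal.mpr (by linarith)
  have htne0 : t ≠ 0 := (lt_of_lt_of_le zero_lt_one ht1).ne'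
  have htnetop : t ≠ ⊤ := ENNReal.ofReal_ne_top
  have hmul : (s6/3) * (s6/2) = 1 := by
    field_simp
    linear_combination hs6sq
  have hinv : ENNReal.ofReal (s6/3) = t⁻¹ := by
    rw [htdef, ← ENNReal.ofReal_inv_of_pos (by linarith)]
    congr 1
    exact eq_inv_of_mul_eq_one_left hmul
  -- the random variables
  set g : Fin 10 → Ω → ENNReal := fun k ω => ENNReal.ofReal (r k.1) ^ (W k.1 ω) with hgdef
  have hg : ∀ k, Measurable (g k) := fun k =>
    (measurable_from_top (f := fun n : ℕ => ENNReal.ofReal (r k.1) ^ n)).comp (hmeas k.1)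
  have hgindep : iIndepFun g P :=
    hindep.comp (fun k n => ENNReal.ofReal (r k.1) ^ n) (fun k => measurable_from_top)
  -- Step A : inclusion of events
  have hsub : {ω | wPrefCount R0 (fun k => W k ω) i j ≤ wPrefCount R0 (fun k => W k ω) j i}
      ⊆ {ω | 1 ≤ ∏ k : Fin 10, g k ω} := by
    intro ω hω
    simp only [Set.mem_setOf_eq, hgdef] at hω ⊢
    rw [wPrefCount_eq, wPrefCount_eq] at hω
    set X : ℕ := ∑ k ∈ Finset.range 10, if pref i j k then W k ω else 0 with hX
    set Y : ℕ := ∑ k ∈ Finset.range 10, if pref j i k then W k ω else 0 with hY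
    have hprod : ∏ k : Fin 10, g k ω = t⁻¹ ^ X * t ^ Y := by
      rw [Fin.prod_univ_eq_prod_range (fun k => ENNReal.ofReal (r k) ^ (W k ω)) 10]
      have h1 : ∀ k ∈ Finset.range 10, ENNReal.ofReal (r k) ^ (W k ω)
          = if pref i j k then t⁻¹ ^ (W k ω) else t ^ (W k ω) := by
        intro k _
        simp only [hrdef]
        split
        · rw [hinv]
        · rfl
      rw [Finset.prod_congr rfl h1, Finset.prod_ite, Finset.prod_pow_eq_pow_sum,
        Finset.prod_pow_eq_pow_sum]
      congr 1
      · congr 1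
        rw [hX, Finset.sum_filter]
      · congr 1
        rw [hY, Finset.sum_filter]
        refine Finset.sum_congr rfl (fun k hk => ?_)
        exact if_congr ((pref_compl hij hk).symm) rfl rfl
    rw [hprod]
    have hXY : t ^ X ≤ t ^ Y := pow_le_pow_right₀ ht1 hω
    calc (1:ENNReal) = t⁻¹ ^ X * t ^ X := by
          rw [← ENNReal.inv_pow, ENNReal.inv_mul_cancel (pow_ne_zero _ htne0)
            (ENNReal.pow_ne_top htnetop)]
      _ ≤ t⁻¹ ^ X * t ^ Y := by gcongr
  -- Step B : Markov
  have hmarkov : P {ω | 1 ≤ ∏ k : Fin 10, g k ω} ≤ ∫⁻ ω, ∏ k : Fin 10, g k ω ∂P := by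
    have hZmeas : Measurable (fun ω => ∏ k : Fin 10, g k ω) := by
      have := Finset.measurable_prod (Finset.univ : Finset (Fin 10)) (fun k _ => hg k)
      simpa [Finset.prod_apply] using this
    simpa using mul_meas_ge_le_lintegral₀ hZmeas.aemeasurable 1
  -- Step C : independence and Poisson MGF
  have hint : ∫⁻ ω, ∏ k : Fin 10, g k ω ∂P
      = ∏ k : Fin 10, ENNReal.ofReal (Real.exp (-(lam/10)) * Real.exp (r k.1 * (lam/10))) := by
    rw [lintegral_prod_indep P hg hgindep]
    refine Finset.prod_congr rfl (fun k _ => ?_)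
    exact lintegral_pow_count P lam hlam.le (W k.1) (hmeas k.1) (hpois k.1 k.2) (r k.1)
      (hrpos k.1).le
  -- Step D : numeric bound
  have hprodval : ∏ k : Fin 10, ENNReal.ofReal
        (Real.exp (-(lam/10)) * Real.exp (r k.1 * (lam/10)))
      ≤ ENNReal.ofReal (Real.exp (-lam * (1 - Real.sqrt 24 / 5))) := by
    rw [← ENNReal.ofReal_prod_of_nonneg (fun k _ => by positivity)]
    apply ENNReal.ofReal_le_ofReal
    have hre : ∀ k : Fin 10, Real.exp (-(lam/10)) * Real.exp (r k.1 * (lam/10))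
        = Real.exp ((r k.1 - 1) * (lam/10)) := by
      intro k; rw [← Real.exp_add]; ring_nf
    rw [Finset.prod_congr rfl (fun k _ => hre k), ← Real.exp_sum]
    apply Real.exp_le_exp.mpr
    have hsum : ∑ k : Fin 10, (r k.1 - 1) * (lam/10)
        = (∑ k ∈ Finset.range 10, r k - 10) * (lam/10) := by
      rw [Fin.sum_univ_eq_sum_range (fun k => (r k - 1) * (lam/10)) 10]
      rw [← Finset.sum_mul, Finset.sum_sub_distrib]
      simp
    rw [hsum]
    -- compute the sum of r
    set a : ℕ := ((Finset.range 10).filter (fun k => pref i j k)).card with hadef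
    have ha6 : 6 ≤ a := card_pref hij
    have ha10 : a ≤ 10 := le_trans (Finset.card_filter_le _ _) (by simp)
    have hsumr : ∑ k ∈ Finset.range 10, r k = a * (s6/3) + (10 - (a:ℝ)) * (s6/2) := by
      have h2 : a + (Finset.filter (fun k => ¬ pref i j k) (Finset.range 10)).card = 10 := by
        rw [hadef]
        simpa using Finset.card_filter_add_card_filter_not
          (s := Finset.range 10) (p := fun k => pref i j k)
      have h2' : ((Finset.filter (fun k => ¬ pref i j k) (Finset.range 10)).card : ℝ)
          = 10 - (a:ℝ) := by
        have h3 : ((a : ℝ)) + ((Finset.filter (fun k => ¬ pref i j k)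
            (Finset.range 10)).card : ℝ) = 10 := by exact_mod_cast h2
        linarith
      simp only [hrdef]
      rw [Finset.sum_ite, Finset.sum_const, Finset.sum_const, nsmul_eq_mul, nsmul_eq_mul,
        h2', ← hadef]
    rw [hsumr]
    have h24 : Real.sqrt 24 = 2 * s6 := by
      rw [show (24:ℝ) = 2^2 * 6 by norm_num, Real.sqrt_mul (by positivity),
        Real.sqrt_sq (by norm_num)]
    rw [h24]
    have hcast6 : (6:ℝ) ≤ (a:ℝ) := by exact_mod_cast ha6
    nlinarith [mul_nonneg (mul_nonneg hlam.le (by nlinarith : (0:ℝ) ≤ s6))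
      (sub_nonneg.mpr hcast6)]
  calc P {ω | wPrefCount R0 (fun k => W k ω) i j ≤ wPrefCount R0 (fun k => W k ω) j i}
      ≤ P {ω | 1 ≤ ∏ k : Fin 10, g k ω} := measure_mono hsub
    _ ≤ ∫⁻ ω, ∏ k : Fin 10, g k ω ∂P := hmarkov
    _ = _ := hint
    _ ≤ _ := hprodval

lemma tourney {i : ℕ} (hi : i ∈ List.range' 1 8) {j : ℕ} (hj : j ∈ List.range' 1 8)
    (hij : i ≠ j) : (i, j) ∈ eta0Pairs ∨ (j, i) ∈ eta0Pairs := by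
  fin_cases hi <;> fin_cases hj <;> simp_all <;> decide

lemma card_pairs : eta0Pairs.toFinset.card = 28 := by decide


open MeasureTheory in
/-- The example with 8 candidates: with a Poisson number of voters (independent Poisson
counts of mean `λ/10` over the ten rows of `R₀`), the probability that the random
profile generates a pattern different from `η₀` is at most `28·exp(-λ(1 - √24/5))`;
in particular it is at most `1/100` whenever `λ ≥ 394`. -/
theorem stmt17 {Ω : Type*} [MeasurableSpace Ω] (P : Measure Ω) [IsProbabilityMeasure P]
    (lam : ℝ) (hlam : 0 < lam)
    (W : ℕ → Ω → ℕ) (hmeas : ∀ k, Measurable (W k))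
    (hindep : ProbabilityTheory.iIndepFun
      (fun k : Fin 10 => W k.1) P)
    (hpois : ∀ k < 10, ∀ m : ℕ,
      P {ω | W k ω = m} = ENNReal.ofReal
        (Real.exp (-(lam / 10)) * (lam / 10) ^ m / (Nat.factorial m))) :
    P {ω | BadEvent R0 8 eta0 fun k => W k ω}
        ≤ ENNReal.ofReal (28 * Real.exp (-lam * (1 - Real.sqrt 24 / 5))) ∧
    (394 ≤ lam → P {ω | BadEvent R0 8 eta0 fun k => W k ω} ≤ 1/100) := by
  classical
  set B : ENNReal := ENNReal.ofReal (Real.exp (-lam * (1 - Real.sqrt 24 / 5))) with hBdef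
  set A : ℕ × ℕ → Set Ω := fun p =>
    {ω | wPrefCount R0 (fun k => W k ω) p.1 p.2 ≤ wPrefCount R0 (fun k => W k ω) p.2 p.1}
    with hAdef
  have hsub : {ω | BadEvent R0 8 eta0 fun k => W k ω} ⊆ ⋃ p ∈ eta0Pairs.toFinset, A p := by
    rintro ω ⟨i, hi, j, hj, hij, hbad⟩
    by_cases hm : (i, j) ∈ eta0Pairs
    · have h : eta0 i j = true := decide_eq_true hm
      rw [h] at hbad
      have hle : wPrefCount R0 (fun k => W k ω) i j ≤ wPrefCount R0 (fun k => W k ω) j i := by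
        have : ¬ (wPrefCount R0 (fun k => W k ω) j i < wPrefCount R0 (fun k => W k ω) i j) := by
          simpa using hbad
        omega
      refine Set.mem_biUnion (List.mem_toFinset.mpr hm) ?_
      simpa [hAdef] using hle
    · have hmem : (j, i) ∈ eta0Pairs := (tourney hi hj hij).resolve_left hm
      have h : eta0 i j = false := by simpa [eta0] using hm
      rw [h] at hbad
      have hlt : wPrefCount R0 (fun k => W k ω) j i < wPrefCount R0 (fun k => W k ω) i j := by
        simpa using hbad
      refine Set.mem_biUnion (List.mem_toFinset.mpr hmem) ?_
      simp only [hAdef, Set.mem_setOf_eq]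
      omega
  have hmain : P {ω | BadEvent R0 8 eta0 fun k => W k ω} ≤ 28 * B := by
    calc P {ω | BadEvent R0 8 eta0 fun k => W k ω}
        ≤ P (⋃ p ∈ eta0Pairs.toFinset, A p) := measure_mono hsub
      _ ≤ ∑ p ∈ eta0Pairs.toFinset, P (A p) := measure_biUnion_finset_le _ _
      _ ≤ ∑ _p ∈ eta0Pairs.toFinset, B := by
          refine Finset.sum_le_sum (fun p hp => ?_)
          have hmem : (p.1, p.2) ∈ eta0Pairs := by
            rw [Prod.mk.eta]; exact List.mem_toFinset.mp hp
          exact pair_bound P lam hlam W hmeas hindep hpois hmem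
      _ = 28 * B := by rw [Finset.sum_const, card_pairs, nsmul_eq_mul]; norm_num
  have hofReal : ENNReal.ofReal (28 * Real.exp (-lam * (1 - Real.sqrt 24 / 5)))
      = 28 * B := by
    rw [hBdef, ENNReal.ofReal_mul (by norm_num : (0:ℝ) ≤ 28)]
    norm_num
  constructor
  · rw [hofReal]; exact hmain
  · intro h394
    refine le_trans hmain ?_
    -- real arithmetic
    have hs6sq : Real.sqrt 6 ^ 2 = 6 := Real.sq_sqrt (by norm_num)
    have h24 : Real.sqrt 24 = 2 * Real.sqrt 6 := by
      rw [show (24:ℝ) = 2^2 * 6 by norm_num, Real.sqrt_mul (by positivity),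
        Real.sqrt_sq (by norm_num)]
    have hs6le : Real.sqrt 6 ≤ 2.4495 := by
      have h := Real.sqrt_le_sqrt (show (6:ℝ) ≤ 2.4495^2 by norm_num)
      rwa [Real.sqrt_sq (by norm_num)] at h
    have hexp_mono : Real.exp (-lam * (1 - Real.sqrt 24 / 5))
        ≤ Real.exp (-(7.9588 : ℝ)) := by
      apply Real.exp_le_exp.mpr
      rw [h24]
      nlinarith [mul_nonneg (sub_nonneg.mpr h394)
        (show (0:ℝ) ≤ 1 - 2 * Real.sqrt 6 / 5 - 0.0202 by nlinarith)]
    have h2800 : (2800:ℝ) ≤ Real.exp 7.9588 := by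
      have e1 : (2.7182818:ℝ) ≤ Real.exp 1 := by
        have := Real.exp_one_gt_d9; norm_num at this ⊢; linarith
      have e7 : (2.7182818:ℝ)^7 ≤ Real.exp 1 ^ 7 :=
        pow_le_pow_left₀ (by norm_num) e1 7
      have eS0 := Real.sum_le_exp_of_nonneg (show (0:ℝ) ≤ 0.9588 by norm_num) 5
      have eS : (2.6005:ℝ) ≤ Real.exp 0.9588 := by
        refine le_trans ?_ eS0
        norm_num [Finset.sum_range_succ, Nat.factorial]
      have e17 : Real.exp 1 ^ 7 = Real.exp 7 := by
        rw [← Real.exp_nat_mul]; norm_num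
      have hsplit : Real.exp 7.9588 = Real.exp 1 ^ 7 * Real.exp 0.9588 := by
        rw [e17, ← Real.exp_add]; norm_num
      rw [hsplit]
      have hmm : (2.7182818:ℝ)^7 * 2.6005 ≤ Real.exp 1 ^ 7 * Real.exp 0.9588 :=
        mul_le_mul e7 eS (by norm_num) (by positivity)
      nlinarith [hmm]
    have hfinal : 28 * Real.exp (-lam * (1 - Real.sqrt 24 / 5)) ≤ 1/100 := by
      have hneg : Real.exp (-(7.9588:ℝ)) ≤ 1/2800 := by
        rw [Real.exp_neg, inv_eq_one_div]
        exact one_div_le_one_div_of_le (by norm_num) h2800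
      nlinarith [hexp_mono, hneg]
    calc 28 * B = ENNReal.ofReal (28 * Real.exp (-lam * (1 - Real.sqrt 24 / 5))) :=
          hofReal.symm
      _ ≤ ENNReal.ofReal (1/100) := ENNReal.ofReal_le_ofReal hfinal
      _ = 1/100 := by
          rw [ENNReal.ofReal_div_of_pos (by norm_num)]
          norm_num
end
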